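/- Let N ∈ ℕ, let f₁,…,f_N : [0,1] → [0,1] and g₁,…,g_N : [0,1] → ℝ be Lebesgue measurable functions satisfying: (H₁) every f_n is approximately differentiable almost everywhere and satisfies Luzin's condition N; (H₂) there exists K ∈ ℕ such that for every n the set {x ∈ [0,1] : card f_n^{-1}(x) > K} has Lebesgue measure zero; (H₃) f_n^{-1}(A) has Lebesgue measure zero for every n and every Lebesgue-null set A ⊆ ℝ. Let L be the largest m ∈ {1,…,N} such that some intersection f_{n₁}([0,1]) ∩ ⋯ ∩ f_{n_m}([0,1]) with n₁ < ⋯ < n_m has positive Lebesgue measure. If there exists a real constant C such that |g_n(x)| ≤ (C/(KL)) |f_n'(x)| for all n ∈ {1,…,N} and almost all x ∈ [0,1], then the formula Ph = Σ_{n=1}^N g_n·(h∘f_n) defines a linear operator P : L¹([0,1]) → L¹([0,1]) (independent of the choice of representative of h), which is continuous and satisfies ‖P‖_* ≤ C. -/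

import Mathlib

open MeasureTheory Filter Set Topology
open scoped Classical

noncomputable abbrev μ01 : MeasureTheory.Measure ℝ := MeasureTheory.volume.restrict (Set.Icc 0 1)

/-- `x` is a Lebesgue density point of the set `S ⊆ ℝ`. -/
def DensityPt (S : Set ℝ) (x : ℝ) : Prop :=
  Tendsto (fun r : ℝ =>
      MeasureTheory.volume (S ∩ Metric.closedBall x r) / MeasureTheory.volume (Metric.closedBall x r))
    (𝓝[>] 0) (𝓝 1)

/-- `h` has the linear map `t ↦ a * t` as approximate differential at `x₀` (relative to `E`). -/
def HasApproxDerivAt (E : Set ℝ) (h : ℝ → ℝ) (a : ℝ) (x₀ : ℝ) : Prop :=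
  ∀ ε > 0, DensityPt {x | x ∈ E ∧ x ≠ x₀ ∧ |h x - h x₀ - a * (x - x₀)| / |x - x₀| < ε} x₀

noncomputable def approxDeriv (E : Set ℝ) (h : ℝ → ℝ) (x : ℝ) : ℝ :=
  if hd : ∃ a, HasApproxDerivAt E h a x then hd.choose else 0

open scoped ENNReal NNReal

section Aux

lemma cb_ne_zero {x r : ℝ} (hr : 0 < r) : volume (Metric.closedBall x r) ≠ 0 := by
  rw [Real.volume_closedBall]
  simp [ENNReal.ofReal_eq_zero]
  linarith

lemma cb_ne_top {x r : ℝ} : volume (Metric.closedBall x r) ≠ ⊤ := by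
  rw [Real.volume_closedBall]; exact ENNReal.ofReal_ne_top

lemma densityPt_squeeze {S T : Set ℝ} {x : ℝ} (h : DensityPt S x)
    (hle : ∀ᶠ r in 𝓝[>] (0:ℝ),
      volume (S ∩ Metric.closedBall x r) ≤ volume (T ∩ Metric.closedBall x r)) :
    DensityPt T x := by
  apply tendsto_of_tendsto_of_tendsto_of_le_of_le' h tendsto_const_nhds
  · filter_upwards [hle] with r hr
    exact ENNReal.div_le_div_right hr _
  · filter_upwards [self_mem_nhdsWithin] with r _
    refine ENNReal.div_le_of_le_mul ?_
    rw [one_mul]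
    exact measure_mono inter_subset_right

lemma DensityPt.mono {S T : Set ℝ} {x : ℝ} (h : DensityPt S x) (hST : S ⊆ T) : DensityPt T x :=
  densityPt_squeeze h (Eventually.of_forall fun r =>
    measure_mono (inter_subset_inter_left _ hST))

lemma DensityPt.eventually_le {S : Set ℝ} {x : ℝ} (h : DensityPt S x) {c : ℝ≥0∞} (hc : c < 1) :
    ∀ᶠ r in 𝓝[>] (0:ℝ),
      c * volume (Metric.closedBall x r) ≤ volume (S ∩ Metric.closedBall x r) := by
  filter_upwards [h.eventually (lt_mem_nhds hc), self_mem_nhdsWithin] with r hr hr0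
  have h0 : volume (Metric.closedBall x r) ≠ 0 := cb_ne_zero hr0
  calc c * volume (Metric.closedBall x r)
      ≤ (volume (S ∩ Metric.closedBall x r) / volume (Metric.closedBall x r)) *
        volume (Metric.closedBall x r) := mul_le_mul_left hr.le _
    _ = volume (S ∩ Metric.closedBall x r) := ENNReal.div_mul_cancel h0 cb_ne_top

lemma exists_common_near {S T : Set ℝ} {x : ℝ} (hS : MeasurableSet S) (hT : MeasurableSet T)
    (h1 : DensityPt S x) (h2 : DensityPt T x) {δ : ℝ} (hδ : 0 < δ) :
    ∃ y, y ∈ S ∧ y ∈ T ∧ |y - x| ≤ δ := by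
  have hc : ENNReal.ofReal (3/4) < 1 := by
    rw [show (1:ℝ≥0∞) = ENNReal.ofReal 1 from ENNReal.ofReal_one.symm,
      ENNReal.ofReal_lt_ofReal_iff one_pos]
    norm_num
  obtain ⟨r, ⟨e1, e2⟩, hr0, hrδ⟩ :
      ∃ r : ℝ, (ENNReal.ofReal (3/4) * volume (Metric.closedBall x r) ≤ volume (S ∩ Metric.closedBall x r) ∧
        ENNReal.ofReal (3/4) * volume (Metric.closedBall x r) ≤ volume (T ∩ Metric.closedBall x r)) ∧
        0 < r ∧ r < δ := by
    have := ((h1.eventually_le hc).and (h2.eventually_le hc)).and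
      (Ioo_mem_nhdsGT hδ)
    obtain ⟨r, hr⟩ := this.exists
    exact ⟨r, hr.1, hr.2.1, hr.2.2⟩
  set B := Metric.closedBall x r with hB
  have hB0 : volume B ≠ 0 := cb_ne_zero hr0
  have key : volume (S ∩ T ∩ B) ≠ 0 := by
    intro hzero
    have hunion : volume ((S ∩ B) ∪ (T ∩ B)) + volume ((S ∩ B) ∩ (T ∩ B)) =
        volume (S ∩ B) + volume (T ∩ B) := measure_union_add_inter _ (hT.inter measurableSet_closedBall)
    have hinter : (S ∩ B) ∩ (T ∩ B) = S ∩ T ∩ B := by ext y; simp [mem_inter_iff]; tauto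
    rw [hinter, hzero, add_zero] at hunion
    have hle : volume (S ∩ B) + volume (T ∩ B) ≤ volume B := by
      rw [← hunion]; exact measure_mono (union_subset inter_subset_right inter_subset_right)
    have : (ENNReal.ofReal (3/4) + ENNReal.ofReal (3/4)) * volume B ≤ volume B := by
      rw [add_mul]; exact le_trans (add_le_add e1 e2) hle
    have hlt : volume B < (ENNReal.ofReal (3/4) + ENNReal.ofReal (3/4)) * volume B := by
      conv_lhs => rw [← one_mul (volume B)]
      refine ENNReal.mul_lt_mul_left hB0 cb_ne_top ?_
      rw [← ENNReal.ofReal_add (by norm_num) (by norm_num),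
        show (1:ℝ≥0∞) = ENNReal.ofReal 1 from ENNReal.ofReal_one.symm,
        ENNReal.ofReal_lt_ofReal_iff (by norm_num)]
      norm_num
    exact absurd (lt_of_lt_of_le hlt this) (lt_irrefl _)
  obtain ⟨y, hy⟩ := nonempty_of_measure_ne_zero key
  refine ⟨y, hy.1.1, hy.1.2, ?_⟩
  have := hy.2
  rw [Metric.mem_closedBall, Real.dist_eq] at this
  linarith

lemma approx_set_measurable {E : Set ℝ} (hE : MeasurableSet E) {h : ℝ → ℝ} (hh : Measurable h)
    (a x ε : ℝ) :
    MeasurableSet {y | y ∈ E ∧ y ≠ x ∧ |h y - h x - a * (y - x)| / |y - x| < ε} := by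
  have hfun : Measurable fun y : ℝ => |h y - h x - a * (y - x)| / |y - x| :=
    (((hh.sub measurable_const).sub (measurable_const.mul
      (measurable_id.sub measurable_const))).abs).div
      ((measurable_id.sub measurable_const)).abs
  have : {y | y ∈ E ∧ y ≠ x ∧ |h y - h x - a * (y - x)| / |y - x| < ε} =
      E ∩ ({x}ᶜ ∩ {y | |h y - h x - a * (y - x)| / |y - x| < ε}) := by
    ext y
    simp only [mem_setOf_eq, mem_inter_iff, mem_compl_iff, mem_singleton_iff]
  rw [this]
  exact hE.inter ((measurableSet_singleton x).compl.inter
    (measurableSet_lt hfun measurable_const))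

lemma HasApproxDerivAt.unique {E : Set ℝ} {h : ℝ → ℝ} {a b x : ℝ}
    (hE : MeasurableSet E) (hh : Measurable h)
    (ha : HasApproxDerivAt E h a x) (hb : HasApproxDerivAt E h b x) : a = b := by
  by_contra hne
  have habs : 0 < |a - b| := abs_pos.2 (sub_ne_zero.2 hne)
  set ε := |a - b| / 4 with hε
  have hεpos : 0 < ε := by positivity
  obtain ⟨y, ⟨hyE, hyx, hy1⟩, ⟨-, -, hy2⟩, -⟩ :=
    exists_common_near (approx_set_measurable hE hh a x ε) (approx_set_measurable hE hh b x ε)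
      (ha ε hεpos) (hb ε hεpos) one_pos
  have hd : 0 < |y - x| := abs_pos.2 (sub_ne_zero.2 hyx)
  rw [div_lt_iff₀ hd] at hy1 hy2
  have key : |a - b| * |y - x| ≤ |h y - h x - b * (y - x)| + |h y - h x - a * (y - x)| := by
    rw [← abs_mul]
    calc |(a - b) * (y - x)| = |(h y - h x - b * (y - x)) - (h y - h x - a * (y - x))| := by
          ring_nf
      _ ≤ _ := abs_sub _ _
  nlinarith [hy1, hy2, hd, habs]

lemma approxDeriv_eq {E : Set ℝ} (hE : MeasurableSet E) {h : ℝ → ℝ} (hh : Measurable h) {a x : ℝ}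
    (ha : HasApproxDerivAt E h a x) : approxDeriv E h x = a := by
  have hex : ∃ b, HasApproxDerivAt E h b x := ⟨a, ha⟩
  rw [approxDeriv, dif_pos hex]
  exact HasApproxDerivAt.unique hE hh hex.choose_spec ha

lemma hasApproxDeriv_of_eqOn {B E : Set ℝ} (hBE : B ⊆ E) {f G : ℝ → ℝ}
    (hfg : EqOn f G B) {x b : ℝ} (hxB : x ∈ B) (hdens : DensityPt B x)
    (hG : HasDerivAt G b x) : HasApproxDerivAt E f b x := by
  intro ε hε
  have hlo := (hasDerivAt_iff_isLittleO.1 hG).def (half_pos hε)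
  rw [Metric.eventually_nhds_iff] at hlo
  obtain ⟨δ, hδ0, hδ⟩ := hlo
  apply densityPt_squeeze hdens
  filter_upwards [Ioo_mem_nhdsGT hδ0] with r ⟨hr0, hrδ⟩
  have hsub : (B ∩ Metric.closedBall x r) \ {x} ⊆
      {y | y ∈ E ∧ y ≠ x ∧ |f y - f x - b * (y - x)| / |y - x| < ε} ∩ Metric.closedBall x r := by
    rintro y ⟨⟨hyB, hyball⟩, hyx⟩
    simp only [mem_singleton_iff] at hyx
    have hyd : dist y x < δ := lt_of_le_of_lt (Metric.mem_closedBall.1 hyball) hrδ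
    have hest := hδ hyd
    simp only [Real.norm_eq_abs] at hest
    have hdpos : 0 < |y - x| := abs_pos.2 (sub_ne_zero.2 hyx)
    refine ⟨⟨hBE hyB, hyx, ?_⟩, hyball⟩
    rw [div_lt_iff₀ hdpos]
    have heq : f y - f x - b * (y - x) = G y - G x - (y - x) • b := by
      rw [hfg hyB, hfg hxB]; simp [smul_eq_mul]; ring
    rw [heq]
    calc |G y - G x - (y - x) • b| ≤ ε / 2 * |y - x| := hest
      _ < ε * |y - x| := by nlinarith
  calc volume (B ∩ Metric.closedBall x r)
      = volume ((B ∩ Metric.closedBall x r) \ {x}) := by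
        rw [measure_diff_null (measure_singleton x)]
    _ ≤ _ := measure_mono hsub

lemma ae_restrict_densityPt {Rp : Set ℝ} (hR : MeasurableSet Rp) :
    ∀ᵐ x ∂(volume.restrict Rp), DensityPt Rp x := by
  have h1 := Besicovitch.ae_tendsto_measure_inter_div_of_measurableSet volume hR
  have h2 : ∀ᵐ x ∂(volume.restrict Rp),
      Tendsto (fun r => volume (Rp ∩ Metric.closedBall x r) / volume (Metric.closedBall x r))
        (𝓝[>] 0) (𝓝 (Rp.indicator 1 x)) := ae_mono Measure.restrict_le_self h1
  filter_upwards [h2, ae_restrict_mem hR] with x hx hxR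
  rwa [indicator_of_mem hxR] at hx

lemma approxDeriv_restrict_eq {Rp : Set ℝ} (hR : MeasurableSet Rp) (hRicc : Rp ⊆ Icc (0:ℝ) 1)
    {f G : ℝ → ℝ} (hf : Measurable f) (hfg : EqOn f G Rp)
    (hGdiff : ∀ x ∈ Rp, DifferentiableAt ℝ G x) :
    ∀ᵐ x ∂(volume.restrict Rp), approxDeriv (Icc 0 1) f x = deriv G x := by
  filter_upwards [ae_restrict_mem hR, ae_restrict_densityPt hR] with x hxR hdens
  exact approxDeriv_eq measurableSet_Icc hf
    (hasApproxDeriv_of_eqOn hRicc hfg hxR hdens ((hGdiff x hxR).hasDerivAt))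

def GoodSet (f : ℝ → ℝ) (m : ℕ) (x : ℝ) : Set ℝ :=
  {y | y ∈ Icc (0:ℝ) 1 ∧ |f y - f x| ≤ (m+1) * |y - x|}

lemma goodSet_measurable {f : ℝ → ℝ} (hf : Measurable f) (m : ℕ) (x : ℝ) :
    MeasurableSet (GoodSet f m x) := by
  have : GoodSet f m x = Icc 0 1 ∩ {y | |f y - f x| ≤ (m+1) * |y - x|} := rfl
  rw [this]
  exact measurableSet_Icc.inter (measurableSet_le ((hf.sub measurable_const).abs)
    (measurable_const.mul ((measurable_id.sub measurable_const)).abs))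

def Apiece (f : ℝ → ℝ) (m k : ℕ) : Set ℝ :=
  {x | x ∈ Icc (0:ℝ) 1 ∧ ∀ q : ℚ, 0 < (q:ℝ) → (q:ℝ) ≤ 1/(k+1) →
    ENNReal.ofReal (7*q/4) ≤ volume (GoodSet f m x ∩ Metric.closedBall x q)}

lemma apiece_subset_Icc (f : ℝ → ℝ) (m k : ℕ) : Apiece f m k ⊆ Icc (0:ℝ) 1 :=
  fun _ hx => hx.1

lemma measurable_goodvol {f : ℝ → ℝ} (hf : Measurable f) (m : ℕ) (q : ℝ) :
    Measurable fun x => volume (GoodSet f m x ∩ Metric.closedBall x q) := by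
  have hW : MeasurableSet {p : ℝ × ℝ | p.2 ∈ Icc (0:ℝ) 1 ∧
      |f p.2 - f p.1| ≤ (m+1) * |p.2 - p.1| ∧ dist p.2 p.1 ≤ q} := by
    refine MeasurableSet.inter ?_ (MeasurableSet.inter ?_ ?_)
    · exact measurable_snd measurableSet_Icc
    · exact measurableSet_le ((hf.comp measurable_snd).sub (hf.comp measurable_fst)).abs
        (measurable_const.mul ((measurable_snd.sub measurable_fst).abs))
    · exact measurableSet_le (measurable_snd.dist measurable_fst) measurable_const
  have h := measurable_measure_prodMk_left (ν := (volume : Measure ℝ)) hW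
  have heq : ∀ x : ℝ, (Prod.mk x ⁻¹' {p : ℝ × ℝ | p.2 ∈ Icc (0:ℝ) 1 ∧
      |f p.2 - f p.1| ≤ (m+1) * |p.2 - p.1| ∧ dist p.2 p.1 ≤ q}) =
      GoodSet f m x ∩ Metric.closedBall x q := by
    intro x
    ext y
    simp only [GoodSet, mem_inter_iff, mem_setOf_eq, Metric.mem_closedBall, mem_preimage]
    tauto
  simpa only [heq] using h

lemma apiece_measurable {f : ℝ → ℝ} (hf : Measurable f) (m k : ℕ) :
    MeasurableSet (Apiece f m k) := by
  have : Apiece f m k = Icc 0 1 ∩ ⋂ q : ℚ, {x | 0 < (q:ℝ) → (q:ℝ) ≤ 1/(k+1) →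
      ENNReal.ofReal (7*q/4) ≤ volume (GoodSet f m x ∩ Metric.closedBall x q)} := by
    ext x
    simp only [Apiece, mem_setOf_eq, mem_inter_iff, mem_iInter]
  rw [this]
  refine measurableSet_Icc.inter (MeasurableSet.iInter fun q => ?_)
  by_cases h1 : 0 < (q:ℝ)
  · by_cases h2 : (q:ℝ) ≤ 1/(k+1)
    · have heq : {x : ℝ | 0 < (q:ℝ) → (q:ℝ) ≤ 1/(k+1) →
          ENNReal.ofReal (7*q/4) ≤ volume (GoodSet f m x ∩ Metric.closedBall x q)} =
          (fun x => volume (GoodSet f m x ∩ Metric.closedBall x q)) ⁻¹'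
            (Ici (ENNReal.ofReal (7*q/4))) := by
        ext x
        simp only [mem_setOf_eq, mem_preimage, mem_Ici]
        exact ⟨fun hx => hx h1 h2, fun hx _ _ => hx⟩
      rw [heq]
      exact (measurable_goodvol hf m q) measurableSet_Ici
    · have heq : {x : ℝ | 0 < (q:ℝ) → (q:ℝ) ≤ 1/(k+1) →
          ENNReal.ofReal (7*q/4) ≤ volume (GoodSet f m x ∩ Metric.closedBall x q)} = univ := by
        ext x
        simp only [mem_setOf_eq, mem_univ, iff_true]
        exact fun _ hx => absurd hx h2
      rw [heq]; exact MeasurableSet.univ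
  · have heq : {x : ℝ | 0 < (q:ℝ) → (q:ℝ) ≤ 1/(k+1) →
        ENNReal.ofReal (7*q/4) ≤ volume (GoodSet f m x ∩ Metric.closedBall x q)} = univ := by
      ext x
      simp only [mem_setOf_eq, mem_univ, iff_true]
      exact fun hx => absurd hx h1
    rw [heq]; exact MeasurableSet.univ

lemma apiece_cover {f : ℝ → ℝ} {x : ℝ} (hx : x ∈ Icc (0:ℝ) 1) {a : ℝ}
    (ha : HasApproxDerivAt (Icc 0 1) f a x) : ∃ m k, x ∈ Apiece f m k := by
  obtain ⟨m, hm⟩ : ∃ m : ℕ, |a| ≤ (m:ℝ) := exists_nat_ge |a|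
  have hmono : {y | y ∈ Icc (0:ℝ) 1 ∧ y ≠ x ∧ |f y - f x - a*(y-x)|/|y-x| < 1} ⊆
      GoodSet f m x := by
    rintro y ⟨hyI, hyx, hyl⟩
    have hd : 0 < |y - x| := abs_pos.2 (sub_ne_zero.2 hyx)
    rw [div_lt_iff₀ hd] at hyl
    refine ⟨hyI, ?_⟩
    have h2 : |f y - f x| ≤ |f y - f x - a*(y-x)| + |a| * |y-x| := by
      calc |f y - f x| = |(f y - f x - a*(y-x)) + a*(y-x)| := by ring_nf
        _ ≤ |f y - f x - a*(y-x)| + |a*(y-x)| := abs_add_le _ _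
        _ = |f y - f x - a*(y-x)| + |a| * |y-x| := by rw [abs_mul]
    nlinarith
  have hdensG : DensityPt (GoodSet f m x) x := (ha 1 one_pos).mono hmono
  have hc78 : ENNReal.ofReal (7/8) < 1 := by
    rw [show (1:ℝ≥0∞) = ENNReal.ofReal 1 from ENNReal.ofReal_one.symm,
      ENNReal.ofReal_lt_ofReal_iff one_pos]
    norm_num
  have hev := hdensG.eventually_le hc78
  rw [eventually_nhdsWithin_iff, Metric.eventually_nhds_iff] at hev
  obtain ⟨δ, hδ0, hδ⟩ := hev
  obtain ⟨k, hk⟩ : ∃ k : ℕ, 1/((k:ℝ)+1) < δ := exists_nat_one_div_lt hδ0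
  refine ⟨m, k, hx, fun q hq0 hqk => ?_⟩
  have hqδ : dist (q:ℝ) 0 < δ := by
    rw [Real.dist_eq, sub_zero, abs_of_pos hq0]
    exact lt_of_le_of_lt hqk hk
  have := hδ hqδ (mem_Ioi.2 hq0)
  calc ENNReal.ofReal (7*q/4)
      = ENNReal.ofReal (7/8) * volume (Metric.closedBall x q) := by
        rw [Real.volume_closedBall, ← ENNReal.ofReal_mul (by norm_num)]
        congr 1; ring
    _ ≤ _ := this

lemma apiece_dist_le {f : ℝ → ℝ} (hf : Measurable f) {m k : ℕ} {x z : ℝ}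
    (hx : x ∈ Apiece f m k) (hz : z ∈ Apiece f m k) (hd : |x - z| ≤ 1/((k:ℝ)+1)) :
    |f x - f z| ≤ 3*((m:ℝ)+1) * |x - z| := by
  rcases eq_or_ne x z with rfl | hne
  · simp
  have hd0 : 0 < |x - z| := abs_pos.2 (sub_ne_zero.2 hne)
  obtain ⟨q, hq1, hq2, hq3⟩ : ∃ q : ℚ, |x - z| ≤ (q:ℝ) ∧ (q:ℝ) ≤ 9/8 * |x-z| ∧
      (q:ℝ) ≤ 1/((k:ℝ)+1) := by
    rcases lt_or_eq_of_le hd with hlt | heq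
    · obtain ⟨q, hq⟩ := exists_rat_btwn
        (show |x-z| < min (9/8*|x-z|) (1/((k:ℝ)+1)) from lt_min (by nlinarith) hlt)
      exact ⟨q, hq.1.le, (le_min_iff.1 hq.2.le).1, (le_min_iff.1 hq.2.le).2⟩
    · refine ⟨1/((k:ℚ)+1), ?_, ?_, ?_⟩ <;> push_cast <;> rw [← heq] <;> nlinarith
  have hq0 : 0 < (q:ℝ) := lt_of_lt_of_le hd0 hq1
  have e1 := hx.2 q hq0 hq3
  have e2 := hz.2 q hq0 hq3
  set P := GoodSet f m x ∩ Metric.closedBall x (q:ℝ) with hP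
  set Q := GoodSet f m z ∩ Metric.closedBall z (q:ℝ) with hQ
  have hQm : MeasurableSet Q := (goodSet_measurable hf m z).inter measurableSet_closedBall
  have hsub : P ∪ Q ⊆ Icc (min x z - q) (max x z + q) := by
    rintro y (⟨-, hy⟩ | ⟨-, hy⟩) <;> rw [Metric.mem_closedBall, Real.dist_eq, abs_le] at hy
    · exact ⟨by linarith [min_le_left x z], by linarith [le_max_left x z]⟩
    · exact ⟨by linarith [min_le_right x z], by linarith [le_max_right x z]⟩
  have hPQ : volume (P ∩ Q) ≠ 0 := by
    intro h0
    have hunion : volume (P ∪ Q) + volume (P ∩ Q) = volume P + volume Q :=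
      measure_union_add_inter _ hQm
    rw [h0, add_zero] at hunion
    have hle : volume P + volume Q ≤ ENNReal.ofReal (|x-z| + 2*q) := by
      rw [← hunion]
      calc volume (P ∪ Q) ≤ volume (Icc (min x z - q) (max x z + q)) := measure_mono hsub
        _ = ENNReal.ofReal (|x-z| + 2*q) := by
            rw [Real.volume_Icc]
            congr 1
            have : max x z - min x z = |x - z| := by
              rw [max_sub_min_eq_abs, abs_sub_comm]
            linarith
    have hge : ENNReal.ofReal (7*q/4) + ENNReal.ofReal (7*q/4) ≤ volume P + volume Q :=
      add_le_add e1 e2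
    rw [← ENNReal.ofReal_add (by positivity) (by positivity)] at hge
    have := le_trans hge hle
    rw [ENNReal.ofReal_le_ofReal_iff (by positivity)] at this
    nlinarith
  obtain ⟨y, ⟨hyP, hyQ⟩⟩ := nonempty_of_measure_ne_zero hPQ
  obtain ⟨⟨-, hyx⟩, hyxb⟩ := hyP
  obtain ⟨⟨-, hyz⟩, hyzb⟩ := hyQ
  rw [Metric.mem_closedBall, Real.dist_eq] at hyxb hyzb
  have hfx : |f x - f z| ≤ |f y - f x| + |f y - f z| := by
    calc |f x - f z| = |(f y - f z) - (f y - f x)| := by ring_nf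
      _ ≤ |f y - f z| + |f y - f x| := abs_sub _ _
      _ = _ := by ring
  have hyx' : |y - x| ≤ (q:ℝ) := hyxb
  have hyz' : |y - z| ≤ (q:ℝ) := hyzb
  nlinarith [abs_nonneg (y-x), abs_nonneg (y-z), hyx, hyz]

lemma apiece_lipOn {f : ℝ → ℝ} (hf : Measurable f) (m k i : ℕ) :
    LipschitzOnWith (3*(m+1) : ℝ≥0) f
      (Apiece f m k ∩ Icc ((i:ℝ)/((k:ℝ)+1)) (((i:ℝ)+1)/((k:ℝ)+1))) := by
  refine LipschitzOnWith.of_dist_le_mul fun x hx z hz => ?_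
  rw [Real.dist_eq, Real.dist_eq]
  have hd : |x - z| ≤ 1/((k:ℝ)+1) := by
    obtain ⟨-, hx1, hx2⟩ := hx
    obtain ⟨-, hz1, hz2⟩ := hz
    have hk0 : (0:ℝ) < (k:ℝ)+1 := by positivity
    have h1 : (1/((k:ℝ)+1))*((k:ℝ)+1) = 1 := by field_simp
    rw [div_le_iff₀ hk0] at hx1 hz1
    rw [le_div_iff₀ hk0] at hx2 hz2
    rw [abs_le]
    constructor
    · have h2 : -(1/((k:ℝ)+1)) * ((k:ℝ)+1) ≤ (x - z) * ((k:ℝ)+1) := by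
        rw [neg_mul, h1]; nlinarith
      exact le_of_mul_le_mul_right h2 hk0
    · have h2 : (x - z) * ((k:ℝ)+1) ≤ (1/((k:ℝ)+1)) * ((k:ℝ)+1) := by
        rw [h1]; nlinarith
      exact le_of_mul_le_mul_right h2 hk0
  calc |f x - f z| ≤ 3*((m:ℝ)+1) * |x - z| := apiece_dist_le hf hx.1 hz.1 hd
    _ = ((3*(m+1) : ℝ≥0) : ℝ) * |x - z| := by push_cast; ring


lemma interval_abs_sub {x z w : ℝ} (hw : 0 < w) {a : ℝ}
    (hx : x ∈ Icc (a/w) ((a+1)/w)) (hz : z ∈ Icc (a/w) ((a+1)/w)) : |x - z| ≤ 1/w := by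
  obtain ⟨h1, h2⟩ := hx
  obtain ⟨h3, h4⟩ := hz
  rw [div_le_iff₀ hw] at h1 h3
  rw [le_div_iff₀ hw] at h2 h4
  have hinv : (1/w) * w = 1 := by field_simp
  rw [abs_le]
  constructor
  · have : -(1/w) * w ≤ (x - z) * w := by rw [neg_mul, hinv]; nlinarith
    exact le_of_mul_le_mul_right this hw
  · have : (x - z) * w ≤ (1/w) * w := by rw [hinv]; nlinarith
    exact le_of_mul_le_mul_right this hw

section Core

variable {f : ℝ → ℝ}

/-- The core decomposition of `[0,1]` adapted to an a.e. approximately differentiable `f`. -/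
lemma core_decomp (hf : Measurable f)
    (hdiff : volume {x ∈ Icc (0:ℝ) 1 | ¬∃ a, HasApproxDerivAt (Icc 0 1) f a x} = 0) :
    ∃ (R Z : ℕ → Set ℝ) (φ : ℕ → ℝ → ℝ) (Nul : Set ℝ),
      (∀ p, MeasurableSet (R p)) ∧ (∀ p, MeasurableSet (Z p)) ∧
      MeasurableSet Nul ∧ volume Nul = 0 ∧
      (∀ p, R p ⊆ Icc 0 1) ∧ (∀ p, Z p ⊆ Icc 0 1) ∧
      (Icc (0:ℝ) 1 ⊆ (⋃ p, R p) ∪ (⋃ p, Z p) ∪ Nul) ∧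
      (Pairwise (Function.onFun Disjoint R)) ∧
      (∀ p, InjOn f (R p)) ∧
      (∀ p, Measurable (φ p)) ∧
      (∀ p, ∀ x ∈ R p, HasDerivWithinAt f (φ p x) (R p) x) ∧
      (∀ p, ∀ x ∈ Z p, HasDerivWithinAt f 0 (Z p) x) ∧
      (∀ p, ∀ᵐ x ∂(volume.restrict (R p)), approxDeriv (Icc 0 1) f x = φ p x) ∧
      (∀ p, ∀ᵐ x ∂(volume.restrict (Z p)), approxDeriv (Icc 0 1) f x = 0) := by
  set Apc : ℕ × ℕ × ℕ → Set ℝ := fun σ =>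
    Apiece f σ.1 σ.2.1 ∩ Icc ((σ.2.2:ℝ)/((σ.2.1:ℝ)+1)) (((σ.2.2:ℝ)+1)/((σ.2.1:ℝ)+1)) with hApc
  have hApcMeas : ∀ σ, MeasurableSet (Apc σ) := fun σ =>
    (apiece_measurable hf _ _).inter measurableSet_Icc
  have hApcIcc : ∀ σ, Apc σ ⊆ Icc (0:ℝ) 1 := fun σ =>
    (inter_subset_left).trans (apiece_subset_Icc f _ _)
  have hGex : ∀ σ : ℕ × ℕ × ℕ, ∃ G : ℝ → ℝ,
      LipschitzWith (3*(σ.1+1) : ℝ≥0) G ∧ EqOn f G (Apc σ) := fun σ =>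
    (apiece_lipOn hf σ.1 σ.2.1 σ.2.2).extend_real
  choose G hGlip hGeq using hGex
  set Spc : ℕ × ℕ × ℕ → Set ℝ := fun σ => Apc σ ∩ {x | DifferentiableAt ℝ (G σ) x} with hSpc
  have hSpcMeas : ∀ σ, MeasurableSet (Spc σ) := fun σ =>
    (hApcMeas σ).inter (measurableSet_of_differentiableAt ℝ (G σ))
  set Tp : ℕ × ℕ × ℕ → ℕ → Set ℝ := fun σ j =>
    {x | ∀ y : ℝ, |y - x| < 1/((j:ℝ)+1) → |y - x| ≤ ((j:ℝ)+1) * |G σ y - G σ x|} with hTp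
  have hTpClosed : ∀ σ j, IsClosed (Tp σ j) := by
    intro σ j
    have heq : Tp σ j = ⋂ y : ℝ, ({x | |y - x| < 1/((j:ℝ)+1)}ᶜ ∪
        {x | |y - x| ≤ ((j:ℝ)+1) * |G σ y - G σ x|}) := by
      ext x
      simp only [Tp, mem_setOf_eq, mem_iInter, mem_union, mem_compl_iff]
      constructor
      · intro h y
        by_cases hy : |y - x| < 1/((j:ℝ)+1)
        · exact Or.inr (h y hy)
        · exact Or.inl hy
      · intro h y hy
        rcases h y with h' | h'
        · exact absurd hy h'
        · exact h'
    rw [heq]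
    refine isClosed_iInter fun y => IsClosed.union ?_ ?_
    · rw [isClosed_compl_iff]
      exact isOpen_lt ((continuous_const.sub continuous_id).abs) continuous_const
    · exact isClosed_le ((continuous_const.sub continuous_id).abs)
        (continuous_const.mul ((continuous_const.sub (hGlip σ).continuous).abs))
  set Rpre : (ℕ × ℕ × ℕ) × ℕ × ℕ → Set ℝ := fun τ =>
    Spc τ.1 ∩ {x | deriv (G τ.1) x ≠ 0} ∩ Tp τ.1 τ.2.1 ∩
      Icc ((τ.2.2:ℝ)/((τ.2.1:ℝ)+2)) (((τ.2.2:ℝ)+1)/((τ.2.1:ℝ)+2)) with hRpre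
  have hRpreMeas : ∀ τ, MeasurableSet (Rpre τ) := fun τ =>
    (((hSpcMeas τ.1).inter (((measurable_deriv (G τ.1)) (measurableSet_singleton 0)).compl)).inter
      (hTpClosed τ.1 τ.2.1).measurableSet).inter measurableSet_Icc
  set Zpre : ℕ × ℕ × ℕ → Set ℝ := fun σ => Spc σ ∩ {x | deriv (G σ) x = 0} with hZpre
  have hZpreMeas : ∀ σ, MeasurableSet (Zpre σ) := fun σ =>
    (hSpcMeas σ).inter ((measurable_deriv (G σ)) (measurableSet_singleton 0))
  set e : ℕ ≃ (ℕ × ℕ × ℕ) × ℕ × ℕ := (Denumerable.eqv ((ℕ × ℕ × ℕ) × ℕ × ℕ)).symm with he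
  set e3 : ℕ ≃ ℕ × ℕ × ℕ := (Denumerable.eqv (ℕ × ℕ × ℕ)).symm with he3
  set R : ℕ → Set ℝ := disjointed (fun n => Rpre (e n)) with hR
  set Z : ℕ → Set ℝ := fun n => Zpre (e3 n) with hZ
  set φ : ℕ → ℝ → ℝ := fun n => deriv (G (e n).1) with hφ
  have hRsub : ∀ p, R p ⊆ Rpre (e p) := fun p => disjointed_subset _ p
  have hRApc : ∀ p, R p ⊆ Apc (e p).1 := fun p hy =>
    fun hx => (((hRsub p hx).1.1).1).1
  have hRIcc : ∀ p, R p ⊆ Icc (0:ℝ) 1 := fun p => (hRApc p).trans (hApcIcc _)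
  have hZIcc : ∀ p, Z p ⊆ Icc (0:ℝ) 1 := fun p =>
    (inter_subset_left).trans ((inter_subset_left).trans (hApcIcc _))
  set Nul0 : Set ℝ := {x ∈ Icc (0:ℝ) 1 | ¬∃ a, HasApproxDerivAt (Icc 0 1) f a x} ∪
    ⋃ σ : ℕ × ℕ × ℕ, (Apc σ ∩ {x | ¬ DifferentiableAt ℝ (G σ) x}) with hNul0
  have hNul0vol : volume Nul0 = 0 := by
    refine measure_union_null hdiff (measure_iUnion_null fun σ => ?_)
    have hae := (hGlip σ).ae_differentiableAt (μ := volume)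
    rw [ae_iff] at hae
    exact measure_mono_null (fun x hx => hx.2) hae
  refine ⟨R, Z, φ, toMeasurable volume Nul0,
    fun p => MeasurableSet.disjointed (fun n => hRpreMeas (e n)) p,
    fun p => hZpreMeas (e3 p),
    measurableSet_toMeasurable _ _,
    by rwa [measure_toMeasurable],
    hRIcc, hZIcc, ?_, disjoint_disjointed _, ?_, fun p => measurable_deriv _, ?_, ?_, ?_, ?_⟩
  · -- coverage
    intro x hx
    by_cases hxR : x ∈ ⋃ p, R p
    · exact Or.inl (Or.inl hxR)
    by_cases hxZ : x ∈ ⋃ p, Z p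
    · exact Or.inl (Or.inr hxZ)
    right
    apply subset_toMeasurable
    by_cases hex : ∃ a, HasApproxDerivAt (Icc 0 1) f a x
    swap
    · exact Or.inl ⟨hx, hex⟩
    obtain ⟨a, ha⟩ := hex
    obtain ⟨m, k, hmk⟩ := apiece_cover hx ha
    have hx0 : 0 ≤ x := hx.1
    have hk1 : (0:ℝ) < (k:ℝ)+1 := by positivity
    set i : ℕ := ⌊x * ((k:ℝ)+1)⌋₊ with hi
    have hxApc : x ∈ Apc (m, k, i) := by
      refine ⟨hmk, ?_, ?_⟩
      · rw [div_le_iff₀ hk1]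
        exact Nat.floor_le (by positivity)
      · rw [le_div_iff₀ hk1]
        exact (Nat.lt_floor_add_one _).le
    set σ : ℕ × ℕ × ℕ := (m, k, i) with hσ
    by_cases hdG : DifferentiableAt ℝ (G σ) x
    swap
    · exact Or.inr (mem_iUnion.2 ⟨σ, hxApc, hdG⟩)
    exfalso
    by_cases hd0 : deriv (G σ) x = 0
    · refine hxZ (mem_iUnion.2 ⟨e3.symm σ, ?_⟩)
      show x ∈ Zpre (e3 (e3.symm σ))
      rw [Equiv.apply_symm_apply]
      exact ⟨⟨hxApc, hdG⟩, hd0⟩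
    have hdabs : 0 < |deriv (G σ) x| := abs_pos.2 hd0
    have hlo := (hasDerivAt_iff_isLittleO.1 hdG.hasDerivAt).def (half_pos hdabs)
    rw [Metric.eventually_nhds_iff] at hlo
    obtain ⟨δ, hδ0, hδ⟩ := hlo
    obtain ⟨j₁, hj₁⟩ : ∃ j : ℕ, 1/((j:ℝ)+1) < δ := exists_nat_one_div_lt hδ0
    obtain ⟨j₂, hj₂⟩ : ∃ j : ℕ, 2/|deriv (G σ) x| ≤ (j:ℝ) := exists_nat_ge _
    set j := max j₁ j₂ with hj
    have hxT : x ∈ Tp σ j := by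
      intro y hy
      have hyδ : dist y x < δ := by
        rw [Real.dist_eq]
        have hj1j : (j₁:ℝ) + 1 ≤ (j:ℝ) + 1 := by
          have : (j₁:ℝ) ≤ (j:ℝ) := Nat.cast_le.2 (le_max_left j₁ j₂)
          linarith
        calc |y - x| < 1/((j:ℝ)+1) := hy
          _ ≤ 1/((j₁:ℝ)+1) := one_div_le_one_div_of_le (by positivity) hj1j
          _ < δ := hj₁
      have hest := hδ hyδ
      simp only [Real.norm_eq_abs, smul_eq_mul] at hest
      set d := deriv (G σ) x with hdd
      set t := y - x with ht
      set u := G σ y - G σ x with hu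
      have habs1 : |t * d| - |t * d - u| ≤ |u| := by
        have h := abs_sub_abs_le_abs_sub (t * d) (t * d - u)
        have heq : t * d - (t * d - u) = u := by ring
        rwa [heq] at h
      have habs2 : |t * d| = |t| * |d| := abs_mul t d
      have hcomm : |t * d - u| = |u - t * d| := abs_sub_comm _ _
      have h2 : 2 ≤ ((j:ℝ)+1) * |d| := by
        rw [div_le_iff₀ hdabs] at hj₂
        have hjj : (j₂:ℝ) ≤ (j:ℝ) := Nat.cast_le.2 (le_max_right j₁ j₂)
        nlinarith [abs_nonneg d]
      have hest' : |u - t * d| ≤ |d|/2 * |t| := by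
        calc |u - t * d| = |G σ y - G σ x - (y - x) * d| := by rw [hu, ht]
          _ ≤ |d|/2 * |y - x| := by convert hest using 2 <;> ring
          _ = |d|/2 * |t| := by rw [ht]
      have key : |d| * |t| / 2 ≤ |u| := by nlinarith
      have jpos : (0:ℝ) ≤ (j:ℝ)+1 := by positivity
      have k1 := mul_le_mul_of_nonneg_left key jpos
      have k2 := mul_le_mul_of_nonneg_left h2 (abs_nonneg t)
      nlinarith
    set i' : ℕ := ⌊x * ((j:ℝ)+2)⌋₊ with hi'
    have hj2' : (0:ℝ) < (j:ℝ)+2 := by positivity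
    have hxI : x ∈ Icc ((i':ℝ)/((j:ℝ)+2)) (((i':ℝ)+1)/((j:ℝ)+2)) := by
      constructor
      · rw [div_le_iff₀ hj2']
        exact Nat.floor_le (by positivity)
      · rw [le_div_iff₀ hj2']
        exact (Nat.lt_floor_add_one _).le
    apply hxR
    have hcup : (⋃ p, R p) = ⋃ n, Rpre (e n) := iUnion_disjointed
    rw [hcup]
    refine mem_iUnion.2 ⟨e.symm (σ, j, i'), ?_⟩
    show x ∈ Rpre (e (e.symm (σ, j, i')))
    rw [Equiv.apply_symm_apply]
    exact ⟨⟨⟨⟨hxApc, hdG⟩, hd0⟩, hxT⟩, hxI⟩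
  · -- injectivity
    intro p x hx z hz hfxz
    have hx' := hRsub p hx
    have hz' := hRsub p hz
    obtain ⟨⟨⟨⟨hxA, hxD⟩, hxd0⟩, hxT⟩, hxI⟩ := hx'
    obtain ⟨⟨⟨⟨hzA, hzD⟩, hzd0⟩, hzT⟩, hzI⟩ := hz'
    by_contra hne
    have hj2' : (0:ℝ) < ((e p).2.1:ℝ)+2 := by positivity
    have hdist : |z - x| < 1/(((e p).2.1:ℝ)+1) := by
      calc |z - x| ≤ 1/(((e p).2.1:ℝ)+2) := interval_abs_sub hj2' hzI hxI
        _ < 1/(((e p).2.1:ℝ)+1) := by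
            apply one_div_lt_one_div_of_lt (by positivity)
            linarith
    have hTz := hxT z hdist
    have hGz : G (e p).1 z = G (e p).1 x := by
      rw [← hGeq (e p).1 hxA, ← hGeq (e p).1 hzA, hfxz]
    rw [hGz, sub_self, abs_zero, mul_zero] at hTz
    have : z = x := by
      have := abs_nonneg (z - x)
      have : |z - x| = 0 := le_antisymm hTz this
      rwa [abs_eq_zero, sub_eq_zero] at this
    exact hne this.symm
  · -- HasDerivWithinAt on R
    intro p x hx
    obtain ⟨⟨⟨⟨hxA, hxD⟩, -⟩, -⟩, -⟩ := hRsub p hx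
    exact (hxD.hasDerivAt.hasDerivWithinAt).congr
      (fun y hy => hGeq _ (hRApc p hy)) (hGeq _ hxA)
  · -- HasDerivWithinAt on Z
    intro p x hx
    obtain ⟨⟨hxA, hxD⟩, hd0⟩ := hx
    have : HasDerivAt (G (e3 p)) 0 x := by
      have h := hxD.hasDerivAt
      rwa [hd0] at h
    refine (this.hasDerivWithinAt).congr
      (fun y hy => hGeq _ hy.1.1) (hGeq _ hxA)
  · -- a.e. equality on R
    intro p
    have := approxDeriv_restrict_eq (MeasurableSet.disjointed (fun n => hRpreMeas (e n)) p)
      (hRIcc p) hf ((hGeq (e p).1).mono (hRApc p))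
      (fun x hx => ((hRsub p hx).1.1.1).2)
    exact this
  · -- a.e. equality on Z
    intro p
    have h1 := approxDeriv_restrict_eq (hZpreMeas (e3 p))
      (hZIcc p) hf ((hGeq (e3 p)).mono (fun y hy => hy.1.1))
      (fun x hx => hx.1.2)
    filter_upwards [h1, ae_restrict_mem (hZpreMeas (e3 p))] with x h hxZ
    rw [h, hxZ.2]

end Core

lemma lintegral_image_eq_one_dim {s : Set ℝ} {f f' : ℝ → ℝ} (hs : MeasurableSet s)
    (hf' : ∀ x ∈ s, HasDerivWithinAt f (f' x) s x) (hinj : InjOn f s) (g : ℝ → ℝ≥0∞) :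
    ∫⁻ y in f '' s, g y = ∫⁻ x in s, ENNReal.ofReal |f' x| * g (f x) := by
  have h := lintegral_image_eq_lintegral_abs_det_fderiv_mul volume hs
    (fun x hx => (hf' x hx).hasFDerivWithinAt) hinj g
  simpa only [ContinuousLinearMap.det_toSpanSingleton] using h

lemma image_vol_le_one_dim {s : Set ℝ} {f f' : ℝ → ℝ} (hs : MeasurableSet s)
    (hf' : ∀ x ∈ s, HasDerivWithinAt f (f' x) s x) :
    volume (f '' s) ≤ ∫⁻ x in s, ENNReal.ofReal |f' x| := by
  have h := addHaar_image_le_lintegral_abs_det_fderiv volume hs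
    (fun x hx => (hf' x hx).hasFDerivWithinAt)
  simpa only [ContinuousLinearMap.det_toSpanSingleton] using h

/-- Main quantitative bound: the weighted pushforward inequality. -/
lemma main_bound {f : ℝ → ℝ} (hf : Measurable f)
    (hmaps : MapsTo f (Icc 0 1) (Icc 0 1))
    (hdiff : volume {x ∈ Icc (0:ℝ) 1 | ¬∃ a, HasApproxDerivAt (Icc 0 1) f a x} = 0)
    (K : ℕ)
    (hK : volume {y ∈ Icc (0:ℝ) 1 | (K : ℕ∞) < (Icc (0:ℝ) 1 ∩ f ⁻¹' {y}).encard} = 0) :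
    ∃ U : Set ℝ, MeasurableSet U ∧ U ⊆ f '' (Icc 0 1) ∧ ∀ W : ℝ → ℝ≥0∞, Measurable W →
      ∫⁻ x in Icc (0:ℝ) 1, (‖approxDeriv (Icc 0 1) f x‖₊ : ℝ≥0∞) * W (f x) ≤
        K * ∫⁻ y in U, W y := by
  obtain ⟨R, Z, φ, Nul, hRmeas, hZmeas, hNmeas, hNvol, hRicc, hZicc, hcover, hdisj, hinj,
    hφmeas, hRderiv, hZderiv, hRae, hZae⟩ := core_decomp hf hdiff
  set Y : ℕ → Set ℝ := fun p => f '' R p with hY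
  have hYmeas : ∀ p, MeasurableSet (Y p) := fun p =>
    (hRmeas p).image_of_continuousOn_injOn
      (fun x hx => (hRderiv p x hx).continuousWithinAt) (hinj p)
  have hYim : ∀ p, Y p ⊆ f '' (Icc 0 1) := fun p => image_mono (hRicc p)
  refine ⟨⋃ p, Y p, MeasurableSet.iUnion hYmeas, iUnion_subset hYim, ?_⟩
  intro W hW
  set Φ : ℝ → ℝ≥0∞ := fun x => (‖approxDeriv (Icc 0 1) f x‖₊ : ℝ≥0∞) * W (f x) with hΦ
  -- Step 1: split into the pieces
  have step1 : ∫⁻ x in Icc (0:ℝ) 1, Φ x ≤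
      (∑' p, ∫⁻ x in R p, Φ x) + ((∑' p, ∫⁻ x in Z p, Φ x) + ∫⁻ x in Nul, Φ x) := by
    have hle : volume.restrict (Icc (0:ℝ) 1) ≤
        (Measure.sum (fun p => volume.restrict (R p))) +
          ((Measure.sum (fun p => volume.restrict (Z p))) + volume.restrict Nul) := by
      have h0 : volume.restrict (Icc (0:ℝ) 1) ≤
          volume.restrict ((⋃ p, R p) ∪ ((⋃ p, Z p) ∪ Nul)) := by
        apply Measure.restrict_mono _ le_rfl
        intro x hx
        rcases hcover hx with (h | h) | h
        · exact Or.inl h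
        · exact Or.inr (Or.inl h)
        · exact Or.inr (Or.inr h)
      refine h0.trans ((Measure.restrict_union_le _ _).trans (add_le_add ?_ ?_))
      · exact Measure.restrict_iUnion_le
      · exact (Measure.restrict_union_le _ _).trans
          (add_le_add Measure.restrict_iUnion_le le_rfl)
    calc ∫⁻ x in Icc (0:ℝ) 1, Φ x ≤ _ := lintegral_mono' hle le_rfl
      _ = _ := by rw [lintegral_add_measure, lintegral_sum_measure, lintegral_add_measure,
        lintegral_sum_measure]
  -- Z pieces contribute nothing
  have hZzero : ∀ p, ∫⁻ x in Z p, Φ x = 0 := by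
    intro p
    have : ∫⁻ x in Z p, Φ x = ∫⁻ x in Z p, 0 := by
      apply lintegral_congr_ae
      filter_upwards [hZae p] with x hx
      simp [hΦ, hx]
    simpa using this
  -- Nul contributes nothing
  have hNzero : ∫⁻ x in Nul, Φ x = 0 := by
    rw [Measure.restrict_eq_zero.2 hNvol, lintegral_zero_measure]
  -- R pieces transform into images
  have hRint : ∀ p, ∫⁻ x in R p, Φ x = ∫⁻ y in Y p, W y := by
    intro p
    have h1 : ∫⁻ x in R p, Φ x = ∫⁻ x in R p, ENNReal.ofReal |φ p x| * W (f x) := by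
      apply lintegral_congr_ae
      filter_upwards [hRae p] with x hx
      show (‖approxDeriv (Icc 0 1) f x‖₊ : ℝ≥0∞) * W (f x) = _
      rw [hx, ← enorm_eq_nnnorm, Real.enorm_eq_ofReal_abs]
    rw [h1, hY]
    exact (lintegral_image_eq_one_dim (hRmeas p) (hRderiv p) (hinj p) W).symm
  -- Step 2: sum of image integrals is bounded by K times the union integral
  have step2 : ∑' p, ∫⁻ y in Y p, W y ≤ (K:ℝ≥0∞) * ∫⁻ y in ⋃ p, Y p, W y := by
    have hInd : ∀ p, ∫⁻ y in Y p, W y = ∫⁻ y, (Y p).indicator W y :=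
      fun p => (lintegral_indicator (hYmeas p) W).symm
    have hIndU : ∫⁻ y in ⋃ p, Y p, W y = ∫⁻ y, (⋃ p, Y p).indicator W y :=
      (lintegral_indicator (MeasurableSet.iUnion hYmeas) W).symm
    simp_rw [hInd, hIndU]
    rw [← lintegral_tsum (fun p => (hW.indicator (hYmeas p)).aemeasurable),
      ← lintegral_const_mul _ (hW.indicator (MeasurableSet.iUnion hYmeas))]
    apply lintegral_mono_ae
    rw [ae_iff]
    refine measure_mono_null ?_ hK
    intro y hy
    simp only [mem_setOf_eq, not_le] at hy
    by_contra hyB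
    refine absurd hy (not_lt.2 ?_)
    simp only [mem_setOf_eq, not_and, not_lt] at hyB
    -- pointwise bound
    by_cases hyU : y ∈ ⋃ p, Y p
    swap
    · have hz : ∀ p, (Y p).indicator W y = 0 :=
        fun p => indicator_of_notMem (fun h => hyU (mem_iUnion.2 ⟨p, h⟩)) W
      simp only [hz, tsum_zero]
      exact zero_le
    rw [indicator_of_mem hyU]
    have hyIcc : y ∈ Icc (0:ℝ) 1 := by
      obtain ⟨p, hp⟩ := mem_iUnion.1 hyU
      exact hmaps.image_subset (hYim p hp)
    have hcard : (Icc (0:ℝ) 1 ∩ f ⁻¹' {y}).encard ≤ (K : ℕ∞) := hyB hyIcc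
    have hsplit : ∀ p, (Y p).indicator W y =
        (Y p).indicator (fun _ => (1:ℝ≥0∞)) y * W y := by
      intro p
      by_cases h : y ∈ Y p <;> simp [h]
    simp_rw [hsplit]
    rw [ENNReal.tsum_mul_right]
    apply mul_le_mul_left
    -- counting bound
    set ψ : ℕ → ℝ := fun p => if h : y ∈ Y p then ((mem_image f (R p) y).1 h).choose else 0
      with hψ
    have hψR : ∀ p, y ∈ Y p → ψ p ∈ R p := by
      intro p h
      rw [hψ]
      simp only [dif_pos h]
      exact ((mem_image f (R p) y).1 h).choose_spec.1
    have hψf : ∀ p, y ∈ Y p → f (ψ p) = y := by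
      intro p h
      rw [hψ]
      simp only [dif_pos h]
      exact ((mem_image f (R p) y).1 h).choose_spec.2
    rw [ENNReal.tsum_eq_iSup_sum]
    refine iSup_le fun F => ?_
    have hsum : ∑ p ∈ F, (Y p).indicator (fun _ => (1:ℝ≥0∞)) y =
        ((F.filter (fun p => y ∈ Y p)).card : ℝ≥0∞) := by
      rw [Finset.card_eq_sum_ones, Nat.cast_sum, Finset.sum_filter]
      apply Finset.sum_congr rfl
      intro p _
      by_cases h : y ∈ Y p <;> simp [h]
    rw [hsum]
    set Fs := F.filter (fun p => y ∈ Y p) with hFs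
    have hinjψ : InjOn ψ (↑Fs : Set ℕ) := by
      intro p hp q hq hpq
      simp only [hFs, Finset.coe_filter, mem_setOf_eq] at hp hq
      by_contra hne
      have hd := hdisj hne
      exact (hd.ne_of_mem (hψR p hp.2) (hpq ▸ hψR q hq.2)) rfl
    have himg : ψ '' (↑Fs : Set ℕ) ⊆ Icc (0:ℝ) 1 ∩ f ⁻¹' {y} := by
      rintro x ⟨p, hp, rfl⟩
      simp only [hFs, Finset.coe_filter, mem_setOf_eq] at hp
      exact ⟨hRicc p (hψR p hp.2), by simp [hψf p hp.2]⟩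
    have hchain : (Fs.card : ℕ∞) ≤ (K : ℕ∞) := by
      calc (Fs.card : ℕ∞) = (↑Fs : Set ℕ).encard := (Set.encard_coe_eq_coe_finsetCard Fs).symm
        _ = (ψ '' (↑Fs : Set ℕ)).encard := hinjψ.encard_image.symm
        _ ≤ (Icc (0:ℝ) 1 ∩ f ⁻¹' {y}).encard := Set.encard_le_encard himg
        _ ≤ (K : ℕ∞) := hcard
    have : Fs.card ≤ K := by exact_mod_cast hchain
    exact_mod_cast Nat.cast_le.2 this
  -- put the steps together
  calc ∫⁻ x in Icc (0:ℝ) 1, Φ x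
      ≤ (∑' p, ∫⁻ x in R p, Φ x) + ((∑' p, ∫⁻ x in Z p, Φ x) + ∫⁻ x in Nul, Φ x) := step1
    _ = ∑' p, ∫⁻ y in Y p, W y := by simp [hZzero, hNzero, hRint]
    _ ≤ (K:ℝ≥0∞) * ∫⁻ y in ⋃ p, Y p, W y := step2

/-- If the approximate derivative vanishes a.e., and `f` has Luzin's property (N),
then the image of `[0,1]` is null. -/
lemma image_null {f : ℝ → ℝ} (hf : Measurable f)
    (hdiff : volume {x ∈ Icc (0:ℝ) 1 | ¬∃ a, HasApproxDerivAt (Icc 0 1) f a x} = 0)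
    (hluzin : ∀ A ⊆ Icc (0:ℝ) 1, volume A = 0 → volume (f '' A) = 0)
    (hzero : ∀ᵐ x ∂(volume.restrict (Icc (0:ℝ) 1)), approxDeriv (Icc 0 1) f x = 0) :
    volume (f '' Icc 0 1) = 0 := by
  obtain ⟨R, Z, φ, Nul, hRmeas, hZmeas, hNmeas, hNvol, hRicc, hZicc, hcover, hdisj, hinj,
    hφmeas, hRderiv, hZderiv, hRae, hZae⟩ := core_decomp hf hdiff
  have himg : f '' Icc 0 1 ⊆
      (⋃ p, f '' R p) ∪ ((⋃ p, f '' Z p) ∪ f '' (Nul ∩ Icc 0 1)) := by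
    rintro y ⟨x, hx, rfl⟩
    rcases hcover hx with (h | h) | h
    · obtain ⟨p, hp⟩ := mem_iUnion.1 h
      exact Or.inl (mem_iUnion.2 ⟨p, mem_image_of_mem f hp⟩)
    · obtain ⟨p, hp⟩ := mem_iUnion.1 h
      exact Or.inr (Or.inl (mem_iUnion.2 ⟨p, mem_image_of_mem f hp⟩))
    · exact Or.inr (Or.inr (mem_image_of_mem f ⟨h, hx⟩))
  refine measure_mono_null himg
    (measure_union_null ?_ (measure_union_null ?_ ?_))
  · refine measure_iUnion_null fun p => ?_
    refine le_antisymm (le_trans (image_vol_le_one_dim (hRmeas p) (hRderiv p)) ?_) (zero_le)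
    have hza : ∀ᵐ x ∂volume.restrict (R p), φ p x = 0 := by
      have hz' : ∀ᵐ x ∂volume.restrict (R p), approxDeriv (Icc 0 1) f x = 0 :=
        ae_mono (Measure.restrict_mono (hRicc p) le_rfl) hzero
      filter_upwards [hRae p, hz'] with x h1 h2
      rw [← h1, h2]
    have : ∫⁻ x in R p, ENNReal.ofReal |φ p x| = ∫⁻ x in R p, 0 := by
      apply lintegral_congr_ae
      filter_upwards [hza] with x hx
      simp [hx]
    simp [this]
  · refine measure_iUnion_null fun p => ?_
    refine le_antisymm (le_trans (image_vol_le_one_dim (hZmeas p)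
      (fun x hx => hZderiv p x hx)) ?_) (zero_le)
    simp
  · exact hluzin _ inter_subset_right (measure_mono_null inter_subset_left hNvol)

end Aux

theorem stmt8 (N : ℕ) (f g' : Fin N → ℝ → ℝ)
    (hfmeas : ∀ n, Measurable (f n)) (hgmeas : ∀ n, Measurable (g' n))
    (hmaps : ∀ n, MapsTo (f n) (Icc 0 1) (Icc 0 1))
    -- (H₁): each fₙ is approximately differentiable a.e. and satisfies Luzin's condition N
    (H1diff : ∀ n,
      MeasureTheory.volume {x ∈ Icc (0 : ℝ) 1 | ¬∃ a, HasApproxDerivAt (Icc 0 1) (f n) a x} = 0)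
    (H1LuzinN : ∀ n, ∀ A ⊆ Icc (0 : ℝ) 1,
      MeasureTheory.volume A = 0 → MeasureTheory.volume (f n '' A) = 0)
    -- (H₂): the set {x ∈ [0,1] : card fₙ⁻¹(x) > K} is null
    (K : ℕ)
    (H2 : ∀ n,
      MeasureTheory.volume {y ∈ Icc (0 : ℝ) 1 | (K : ℕ∞) < (Icc (0 : ℝ) 1 ∩ f n ⁻¹' {y}).encard} = 0)
    -- (H₃): preimages of null sets are null
    (H3 : ∀ n, ∀ A : Set ℝ,
      MeasureTheory.volume A = 0 → MeasureTheory.volume (Icc (0 : ℝ) 1 ∩ f n ⁻¹' A) = 0)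
    -- L is the largest m such that some m-fold intersection of images has positive measure
    (L : ℕ)
    (hL : IsGreatest {m : ℕ | 1 ≤ m ∧ m ≤ N ∧
      ∃ s : Finset (Fin N), s.card = m ∧
        0 < MeasureTheory.volume (⋂ n ∈ s, f n '' Icc (0 : ℝ) 1)} L)
    -- |gₙ(x)| ≤ (C/(KL)) |fₙ'(x)| a.e.
    (C : ℝ)
    (hC : ∀ n, ∀ᵐ x ∂μ01,
      |g' n x| ≤ C / ((K : ℝ) * (L : ℝ)) * |approxDeriv (Icc 0 1) (f n) x|) :
    -- the formula is independent of the choice of representative …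
    (∀ h₁ h₂ : ℝ → ℝ, h₁ =ᵐ[μ01] h₂ →
      (fun x => ∑ n, g' n x * h₁ (f n x)) =ᵐ[μ01] fun x => ∑ n, g' n x * h₂ (f n x)) ∧
    -- … and defines a continuous linear operator P on L¹([0,1]) with ‖P‖ ≤ C
    ∃ P : Lp ℝ 1 μ01 →L[ℝ] Lp ℝ 1 μ01,
      (∀ h : Lp ℝ 1 μ01,
        (P h : ℝ → ℝ) =ᵐ[μ01] fun x => ∑ n, g' n x * (h : ℝ → ℝ) (f n x)) ∧
      ‖P‖ ≤ C := by
  obtain ⟨⟨hL1, hLN, s₀, hs₀card, hs₀pos⟩, hLub⟩ := hL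
  have hs₀ne : s₀.Nonempty := Finset.card_pos.1 (by rw [hs₀card]; exact hL1)
  obtain ⟨n₀, hn₀⟩ := hs₀ne
  -- representative independence
  have hrep : ∀ h₁ h₂ : ℝ → ℝ, h₁ =ᵐ[μ01] h₂ →
      (fun x => ∑ n, g' n x * h₁ (f n x)) =ᵐ[μ01] fun x => ∑ n, g' n x * h₂ (f n x) := by
    intro h₁ h₂ hae
    have hA : volume ({y | h₁ y ≠ h₂ y} ∩ Icc 0 1) = 0 := by
      have h0 : μ01 {y | ¬ h₁ y = h₂ y} = 0 := hae
      rwa [Measure.restrict_apply' measurableSet_Icc] at h0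
    have hBadnull : volume (⋃ n, (Icc (0:ℝ) 1 ∩ f n ⁻¹' ({y | h₁ y ≠ h₂ y} ∩ Icc 0 1))) = 0 :=
      measure_iUnion_null fun n => H3 n _ hA
    have hBadnull' : μ01 (⋃ n, (Icc (0:ℝ) 1 ∩ f n ⁻¹' ({y | h₁ y ≠ h₂ y} ∩ Icc 0 1))) = 0 := by
      rw [Measure.restrict_apply' measurableSet_Icc]
      exact measure_mono_null inter_subset_left hBadnull
    have hae2 := measure_eq_zero_iff_ae_notMem.1 hBadnull'
    filter_upwards [hae2, ae_restrict_mem measurableSet_Icc] with x hxB hxI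
    show ∑ n, g' n x * h₁ (f n x) = ∑ n, g' n x * h₂ (f n x)
    refine Finset.sum_congr rfl fun n _ => ?_
    congr 1
    by_contra hne
    exact hxB (mem_iUnion.2 ⟨n, hxI, hne, hmaps n hxI⟩)
  -- K is at least 1
  have hK1 : 1 ≤ K := by
    by_contra hK0
    have hKeq : K = 0 := by omega
    subst hKeq
    have hsub : (⋂ n ∈ s₀, f n '' Icc (0:ℝ) 1) ⊆
        {y ∈ Icc (0:ℝ) 1 | ((0:ℕ) : ℕ∞) < (Icc (0:ℝ) 1 ∩ f n₀ ⁻¹' {y}).encard} := by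
      intro y hy
      have hy₀ : y ∈ f n₀ '' Icc 0 1 := (Set.mem_iInter₂.1 hy) n₀ hn₀
      obtain ⟨x, hx, rfl⟩ := hy₀
      refine ⟨hmaps n₀ hx, ?_⟩
      simp only [Nat.cast_zero]
      exact Set.encard_pos.2 ⟨x, hx, rfl⟩
    exact hs₀pos.ne' (measure_mono_null hsub (H2 n₀))
  have hKR : (1:ℝ) ≤ (K:ℝ) := by exact_mod_cast hK1
  have hLR : (1:ℝ) ≤ (L:ℝ) := by exact_mod_cast hL1
  have hKLpos : (0:ℝ) < (K:ℝ) * (L:ℝ) := by nlinarith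
  rcases lt_or_ge C 0 with hCneg | hC0
  · -- C < 0 is impossible
    exfalso
    have hcneg : C / ((K:ℝ) * (L:ℝ)) < 0 := div_neg_of_neg_of_pos hCneg hKLpos
    have hzero : ∀ᵐ x ∂μ01, approxDeriv (Icc 0 1) (f n₀) x = 0 := by
      filter_upwards [hC n₀] with x hx
      have h1 : 0 ≤ |g' n₀ x| := abs_nonneg _
      have h2 : 0 ≤ |approxDeriv (Icc 0 1) (f n₀) x| := abs_nonneg _
      by_contra hne
      have h3 : 0 < |approxDeriv (Icc 0 1) (f n₀) x| := abs_pos.2 hne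
      nlinarith [mul_neg_of_neg_of_pos hcneg h3]
    exact hs₀pos.ne' (measure_mono_null (fun y hy => (Set.mem_iInter₂.1 hy) n₀ hn₀)
      (image_null (hfmeas n₀) (H1diff n₀) (H1LuzinN n₀) hzero))
  -- main case : C ≥ 0
  set c := C / ((K:ℝ) * (L:ℝ)) with hcdef
  have hc0 : 0 ≤ c := div_nonneg hC0 hKLpos.le
  obtain ⟨U, hUmeas, hUsub, hUbound⟩ :
      ∃ U : Fin N → Set ℝ, (∀ n, MeasurableSet (U n)) ∧ (∀ n, U n ⊆ f n '' Icc 0 1) ∧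
        ∀ n, ∀ W : ℝ → ℝ≥0∞, Measurable W →
          ∫⁻ x in Icc (0:ℝ) 1, (‖approxDeriv (Icc 0 1) (f n) x‖₊ : ℝ≥0∞) * W (f n x) ≤
            K * ∫⁻ y in U n, W y := by
    choose U h1 h2 h3 using fun n => main_bound (hfmeas n) (hmaps n) (H1diff n) K (H2 n)
    exact ⟨U, h1, h2, h3⟩
  -- the set where more than L images overlap is null
  have hZbadnull : volume (⋃ (s : Finset (Fin N)) (_ : s.card = L+1),
      ⋂ n ∈ s, f n '' Icc (0:ℝ) 1) = 0 := by
    refine measure_iUnion_null fun s => measure_iUnion_null fun hs => ?_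
    by_contra hpos
    have hmem : L+1 ∈ {m : ℕ | 1 ≤ m ∧ m ≤ N ∧ ∃ s : Finset (Fin N), s.card = m ∧
        0 < volume (⋂ n ∈ s, f n '' Icc (0:ℝ) 1)} := by
      refine ⟨by omega, ?_, s, hs, pos_iff_ne_zero.2 hpos⟩
      calc L+1 = s.card := hs.symm
        _ ≤ Finset.univ.card := Finset.card_le_univ s
        _ = N := by simp
    have := hLub hmem
    omega
  -- the L-overlap bound
  have hLsum : ∀ W : ℝ → ℝ≥0∞, Measurable W → ∑ n : Fin N, ∫⁻ y in U n, W y ≤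
      (L:ℝ≥0∞) * ∫⁻ y in Icc (0:ℝ) 1, W y := by
    intro W hWmeas
    have hInd : ∀ n, ∫⁻ y in U n, W y = ∫⁻ y, (U n).indicator W y :=
      fun n => (lintegral_indicator (hUmeas n) W).symm
    simp_rw [hInd]
    rw [← lintegral_finset_sum' _ (fun n _ => (hWmeas.indicator (hUmeas n)).aemeasurable),
      show ∫⁻ y in Icc (0:ℝ) 1, W y = ∫⁻ y, (Icc (0:ℝ) 1).indicator W y from
        (lintegral_indicator measurableSet_Icc W).symm,
      ← lintegral_const_mul' _ _ (by simp : ((L:ℝ≥0∞)) ≠ ⊤)]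
    apply lintegral_mono_ae
    rw [ae_iff]
    refine measure_mono_null ?_ hZbadnull
    intro y hy
    simp only [mem_setOf_eq, not_le] at hy
    by_contra hyZ
    refine absurd hy (not_lt.2 ?_)
    by_cases hyU : ∃ n, y ∈ U n
    swap
    · push_neg at hyU
      have hz : ∀ n : Fin N, (U n).indicator W y = 0 := fun n => indicator_of_notMem (hyU n) W
      simp only [hz, Finset.sum_const_zero]
      exact zero_le
    obtain ⟨n₁, hn₁⟩ := hyU
    have hyIcc : y ∈ Icc (0:ℝ) 1 := (hmaps n₁).image_subset (hUsub n₁ hn₁)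
    rw [indicator_of_mem hyIcc]
    have hsum : ∑ n : Fin N, (U n).indicator W y =
        (((Finset.univ.filter (fun n : Fin N => y ∈ U n)).card : ℝ≥0∞)) * W y := by
      rw [Finset.card_eq_sum_ones, Nat.cast_sum, Finset.sum_mul, Finset.sum_filter]
      refine Finset.sum_congr rfl fun n _ => ?_
      by_cases h : y ∈ U n <;> simp [h]
    rw [hsum]
    have hTcard : (Finset.univ.filter (fun n : Fin N => y ∈ U n)).card ≤ L := by
      by_contra hgt
      push_neg at hgt
      obtain ⟨s, hsub2, hscard⟩ := Finset.exists_subset_card_eq hgt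
      apply hyZ
      refine mem_iUnion.2 ⟨s, mem_iUnion.2 ⟨hscard, ?_⟩⟩
      refine Set.mem_iInter₂.2 fun n hn => hUsub n ?_
      exact (Finset.mem_filter.1 (hsub2 hn)).2
    exact mul_le_mul_left (by exact_mod_cast hTcard) _
  -- the per-n bound
  have hpern : ∀ (W : ℝ → ℝ≥0∞), Measurable W → ∀ n : Fin N,
      ∫⁻ x in Icc (0:ℝ) 1, (‖g' n x‖₊ : ℝ≥0∞) * W (f n x) ≤
        ENNReal.ofReal c * ((K:ℝ≥0∞) * ∫⁻ y in U n, W y) := by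
    intro W hWmeas n
    have h1 : ∫⁻ x in Icc (0:ℝ) 1, (‖g' n x‖₊:ℝ≥0∞) * W (f n x) ≤
        ∫⁻ x in Icc (0:ℝ) 1, ENNReal.ofReal c *
          ((‖approxDeriv (Icc 0 1) (f n) x‖₊:ℝ≥0∞) * W (f n x)) := by
      apply lintegral_mono_ae
      filter_upwards [hC n] with x hx
      rw [← enorm_eq_nnnorm, ← enorm_eq_nnnorm, Real.enorm_eq_ofReal_abs, Real.enorm_eq_ofReal_abs, ← mul_assoc,
        ← ENNReal.ofReal_mul hc0]
      exact mul_le_mul_left (ENNReal.ofReal_le_ofReal hx) _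
    rw [lintegral_const_mul' _ _ ENNReal.ofReal_ne_top] at h1
    exact h1.trans (mul_le_mul_right (hUbound n W hWmeas) _)
  -- key estimate
  have key : ∀ hfun2 : ℝ → ℝ, Measurable hfun2 →
      ∫⁻ x in Icc (0:ℝ) 1, (‖∑ n, g' n x * hfun2 (f n x)‖₊ : ℝ≥0∞) ≤
        ENNReal.ofReal C * ∫⁻ y in Icc (0:ℝ) 1, (‖hfun2 y‖₊ : ℝ≥0∞) := by
    intro hfun2 hmeashfun2
    set W : ℝ → ℝ≥0∞ := fun y => (‖hfun2 y‖₊ : ℝ≥0∞) with hWdef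
    have hWmeas : Measurable W := hmeashfun2.nnnorm.coe_nnreal_ennreal
    have hterm : ∀ n : Fin N, Measurable fun x => (‖g' n x‖₊ : ℝ≥0∞) * W (f n x) :=
      fun n => ((hgmeas n).nnnorm.coe_nnreal_ennreal).mul (hWmeas.comp (hfmeas n))
    have hstep0 : ∫⁻ x in Icc (0:ℝ) 1, (‖∑ n, g' n x * hfun2 (f n x)‖₊:ℝ≥0∞) ≤
        ∑ n, ∫⁻ x in Icc (0:ℝ) 1, (‖g' n x‖₊:ℝ≥0∞) * W (f n x) := by
      rw [← lintegral_finset_sum' _ (fun n _ => (hterm n).aemeasurable)]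
      apply lintegral_mono
      intro x
      calc (‖∑ n, g' n x * hfun2 (f n x)‖₊:ℝ≥0∞) ≤ ∑ n, (‖g' n x * hfun2 (f n x)‖₊:ℝ≥0∞) := by
            exact_mod_cast nnnorm_sum_le _ _
        _ = ∑ n, (‖g' n x‖₊:ℝ≥0∞) * W (f n x) := by
            refine Finset.sum_congr rfl fun n _ => ?_
            rw [nnnorm_mul]
            push_cast
            rfl
    refine hstep0.trans ?_
    refine (Finset.sum_le_sum fun n _ => hpern W hWmeas n).trans ?_
    rw [← Finset.mul_sum, ← Finset.mul_sum]
    have harith : ENNReal.ofReal c * ((K:ℝ≥0∞) * (L:ℝ≥0∞)) = ENNReal.ofReal C := by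
      rw [← ENNReal.ofReal_natCast K, ← ENNReal.ofReal_natCast L,
        ← ENNReal.ofReal_mul (Nat.cast_nonneg K), ← ENNReal.ofReal_mul hc0]
      congr 1
      rw [hcdef]
      field_simp
    calc ENNReal.ofReal c * ((K:ℝ≥0∞) * ∑ n : Fin N, ∫⁻ y in U n, W y)
        ≤ ENNReal.ofReal c * ((K:ℝ≥0∞) * ((L:ℝ≥0∞) * ∫⁻ y in Icc (0:ℝ) 1, W y)) :=
          mul_le_mul_right (mul_le_mul_right (hLsum W hWmeas) _) _
      _ = (ENNReal.ofReal c * ((K:ℝ≥0∞) * (L:ℝ≥0∞))) * ∫⁻ y in Icc (0:ℝ) 1, W y := by ring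
      _ = ENNReal.ofReal C * ∫⁻ y in Icc (0:ℝ) 1, W y := by rw [harith]
  -- measurable representatives
  have hmkex : ∀ h : Lp ℝ 1 μ01, ∃ hfun2 : ℝ → ℝ, Measurable hfun2 ∧ (h : ℝ → ℝ) =ᵐ[μ01] hfun2 :=
    fun h => ⟨(Lp.aestronglyMeasurable h).mk _,
      ((Lp.aestronglyMeasurable h).stronglyMeasurable_mk).measurable,
      (Lp.aestronglyMeasurable h).ae_eq_mk⟩
  choose mk hmkMeas hmkAe using hmkex
  set T : (Lp ℝ 1 μ01) → ℝ → ℝ := fun h x => ∑ n, g' n x * mk h (f n x) with hTdef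
  have hTmeas : ∀ h, Measurable (T h) := fun h =>
    Finset.measurable_sum _ (fun n _ => (hgmeas n).mul ((hmkMeas h).comp (hfmeas n)))
  have hTlint : ∀ h, ∫⁻ x, (‖T h x‖₊:ℝ≥0∞) ∂μ01 ≤
      ENNReal.ofReal C * ∫⁻ y, (‖mk h y‖₊:ℝ≥0∞) ∂μ01 :=
    fun h => key (mk h) (hmkMeas h)
  have hmklint : ∀ h : Lp ℝ 1 μ01,
      ∫⁻ y, (‖mk h y‖₊:ℝ≥0∞) ∂μ01 = eLpNorm (h : ℝ → ℝ) 1 μ01 := by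
    intro h
    rw [eLpNorm_one_eq_lintegral_enorm]
    exact (lintegral_congr_ae ((hmkAe h).mono fun x hx => by rw [hx]; rfl)).symm
  have hTfin : ∀ h, MemLp (T h) 1 μ01 := by
    intro h
    refine ⟨(hTmeas h).aestronglyMeasurable, ?_⟩
    rw [eLpNorm_one_eq_lintegral_enorm]
    calc ∫⁻ x, (‖T h x‖₊:ℝ≥0∞) ∂μ01 ≤
        ENNReal.ofReal C * ∫⁻ y, (‖mk h y‖₊:ℝ≥0∞) ∂μ01 := hTlint h
      _ = ENNReal.ofReal C * eLpNorm (h : ℝ → ℝ) 1 μ01 := by rw [hmklint h]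
      _ < ⊤ := ENNReal.mul_lt_top ENNReal.ofReal_lt_top (Lp.eLpNorm_lt_top h)
  have hTae : ∀ h : Lp ℝ 1 μ01, T h =ᵐ[μ01] fun x => ∑ n, g' n x * (h : ℝ → ℝ) (f n x) :=
    fun h => hrep (mk h) (h : ℝ → ℝ) (hmkAe h).symm
  -- the linear map
  set P₀ : Lp ℝ 1 μ01 →ₗ[ℝ] Lp ℝ 1 μ01 :=
    { toFun := fun h => (hTfin h).toLp (T h)
      map_add' := by
        intro h h'
        show (hTfin (h+h')).toLp (T (h+h')) = (hTfin h).toLp (T h) + (hTfin h').toLp (T h')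
        have h1 : (mk (h + h')) =ᵐ[μ01] (fun x => mk h x + mk h' x) := by
          calc mk (h+h') =ᵐ[μ01] ((h + h' : Lp ℝ 1 μ01) : ℝ → ℝ) := (hmkAe _).symm
            _ =ᵐ[μ01] (fun x => (h:ℝ→ℝ) x + (h':ℝ→ℝ) x) := Lp.coeFn_add h h'
            _ =ᵐ[μ01] fun x => mk h x + mk h' x := (hmkAe h).add (hmkAe h')
        have h2 := hrep (mk (h+h')) (fun x => mk h x + mk h' x) h1
        have h3 : T (h+h') =ᵐ[μ01] (T h + T h') := by
          refine h2.trans (Eventually.of_forall fun x => ?_)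
          simp only [Pi.add_apply, hTdef]
          rw [← Finset.sum_add_distrib]
          exact Finset.sum_congr rfl fun n _ => by ring
        have h4 : (hTfin (h+h')).toLp (T (h+h')) =
            ((hTfin h).add (hTfin h')).toLp (T h + T h') :=
          MemLp.toLp_congr _ _ h3
        rw [h4, MemLp.toLp_add]
      map_smul' := by
        intro a h
        show (hTfin (a • h)).toLp (T (a • h)) = a • (hTfin h).toLp (T h)
        have h1 : (mk (a • h)) =ᵐ[μ01] (fun x => a * mk h x) := by
          calc mk (a • h) =ᵐ[μ01] ((a • h : Lp ℝ 1 μ01) : ℝ → ℝ) := (hmkAe _).symm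
            _ =ᵐ[μ01] (fun x => a • (h:ℝ→ℝ) x) := Lp.coeFn_smul a h
            _ =ᵐ[μ01] fun x => a * mk h x := (hmkAe h).mono fun x hx => by
                simp only [smul_eq_mul, hx]
        have h2 := hrep (mk (a • h)) (fun x => a * mk h x) h1
        have h3 : T (a • h) =ᵐ[μ01] (a • T h) := by
          refine h2.trans (Eventually.of_forall fun x => ?_)
          simp only [Pi.smul_apply, hTdef, smul_eq_mul]
          rw [Finset.mul_sum]
          exact Finset.sum_congr rfl fun n _ => by ring
        have h4 : (hTfin (a • h)).toLp (T (a • h)) =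
            ((hTfin h).const_smul a).toLp (a • T h) :=
          MemLp.toLp_congr _ _ h3
        rw [h4, MemLp.toLp_const_smul] } with hP₀
  have hPnorm : ∀ h : Lp ℝ 1 μ01, ‖P₀ h‖ ≤ C * ‖h‖ := by
    intro h
    have hcoe : P₀ h = (hTfin h).toLp (T h) := rfl
    rw [hcoe, Lp.norm_toLp, eLpNorm_one_eq_lintegral_enorm]
    have hb : ∫⁻ x, (‖T h x‖₊:ℝ≥0∞) ∂μ01 ≤ ENNReal.ofReal C * eLpNorm (h : ℝ → ℝ) 1 μ01 := by
      rw [← hmklint h]; exact hTlint h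
    have hne : ENNReal.ofReal C * eLpNorm (h : ℝ → ℝ) 1 μ01 ≠ ⊤ :=
      ENNReal.mul_ne_top ENNReal.ofReal_ne_top (Lp.eLpNorm_ne_top h)
    calc (∫⁻ x, (‖T h x‖₊:ℝ≥0∞) ∂μ01).toReal ≤
        (ENNReal.ofReal C * eLpNorm (h : ℝ → ℝ) 1 μ01).toReal := ENNReal.toReal_mono hne hb
      _ = C * ‖h‖ := by
          rw [ENNReal.toReal_mul, ENNReal.toReal_ofReal hC0, Lp.norm_def]
  refine ⟨hrep, P₀.mkContinuous C hPnorm, fun h => ?_, LinearMap.mkContinuous_norm_le _ hC0 _⟩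
  have hcoe : (P₀.mkContinuous C hPnorm) h = (hTfin h).toLp (T h) := rfl
  rw [hcoe]
  exact (MemLp.coeFn_toLp _).trans (hTae h)
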